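/- Let k be a field and S = k[X₁,…,Xₙ,Y₁,…,Y_r] the polynomial ring bigraded by deg X_i = (1,0) and deg Y_j = (d_j,1) with d_j ≥ 0, and set d = max_j d_j. Let L be a finitely generated bigraded S-module and suppose (S₊)^u · L = 0 for some u ≥ 0, where S₊ is the ideal generated by all products X_iY_j. Then there exist integers m₁, m₂ such that L_{(p,q)} = 0 whenever p > dq + m₁ and q > m₂. -/

import Mathlib

open MvPolynomial

lemma aux_mono {k : Type*} [Field k] {n r : ℕ} (u : ℕ) (σ : (Fin n ⊕ Fin r) →₀ ℕ)
    (h1 : u ≤ ∑ i, σ (Sum.inl i)) (h2 : u ≤ ∑ j, σ (Sum.inr j)) (c : k) :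
    (monomial σ c : MvPolynomial (Fin n ⊕ Fin r) k) ∈
      (Ideal.span {f : MvPolynomial (Fin n ⊕ Fin r) k |
        ∃ i j, f = X (Sum.inl i) * X (Sum.inr j)}) ^ u := by
  induction u generalizing σ with
  | zero => simp [Ideal.one_eq_top]
  | succ u ih =>
    have hi : ∃ i, σ (Sum.inl i) ≠ 0 := by
      by_contra h
      push_neg at h
      rw [Finset.sum_eq_zero (fun i _ => h i)] at h1
      omega
    have hj : ∃ j, σ (Sum.inr j) ≠ 0 := by
      by_contra h
      push_neg at h
      rw [Finset.sum_eq_zero (fun j _ => h j)] at h2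
      omega
    obtain ⟨i, hi⟩ := hi
    obtain ⟨j, hj⟩ := hj
    set σ' : (Fin n ⊕ Fin r) →₀ ℕ :=
      σ - Finsupp.single (Sum.inl i) 1 - Finsupp.single (Sum.inr j) 1 with hσ'
    have hσ : σ = (Finsupp.single (Sum.inl i) 1 + Finsupp.single (Sum.inr j) 1) + σ' := by
      ext x
      rcases x with i' | j' <;>
        simp only [hσ', Finsupp.add_apply, Finsupp.sub_apply, Finsupp.single_apply] <;>
        split_ifs <;> simp_all <;> omega
    have hval1 : ∀ i', σ (Sum.inl i') = (if i = i' then 1 else 0) + σ' (Sum.inl i') := by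
      intro i'
      conv_lhs => rw [hσ]
      simp [Finsupp.single_apply]
    have hval2 : ∀ j', σ (Sum.inr j') = (if j = j' then 1 else 0) + σ' (Sum.inr j') := by
      intro j'
      conv_lhs => rw [hσ]
      simp [Finsupp.single_apply]
    have hs1 : ∑ i', σ (Sum.inl i') = 1 + ∑ i', σ' (Sum.inl i') := by
      simp [hval1, Finset.sum_add_distrib]
    have hs2 : ∑ j', σ (Sum.inr j') = 1 + ∑ j', σ' (Sum.inr j') := by
      simp [hval2, Finset.sum_add_distrib]
    have hmono : (monomial σ c : MvPolynomial (Fin n ⊕ Fin r) k) =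
        (X (Sum.inl i) * X (Sum.inr j)) * monomial σ' c := by
      rw [hσ]
      rw [X, X, monomial_mul, monomial_mul, one_mul, one_mul]
    rw [hmono, pow_succ']
    exact Ideal.mul_mem_mul (Ideal.subset_span ⟨i, j, rfl⟩) (ih σ' (by omega) (by omega))

lemma aux_weight {n r : ℕ} (dvec : Fin r → ℕ) (w : Fin n ⊕ Fin r → ℕ × ℕ)
    (hw : w = Sum.elim (fun _ => (1, 0)) (fun j => (dvec j, 1)))
    (σ : (Fin n ⊕ Fin r) →₀ ℕ) :
    Finsupp.weight w σ =
      ((∑ i, σ (Sum.inl i)) + ∑ j, σ (Sum.inr j) * dvec j, ∑ j, σ (Sum.inr j)) := by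
  rw [Finsupp.weight_apply, Finsupp.sum_fintype _ _ (fun i => zero_smul ℕ (w i)),
    Fintype.sum_sum_type]
  subst hw
  refine Prod.ext ?_ ?_ <;>
    simp [Prod.fst_sum, Prod.snd_sum, Prod.smul_mk, smul_eq_mul]

lemma aux_hom {k : Type*} [Field k] {n r : ℕ} (dvec : Fin r → ℕ) (d : ℕ)
    (hd : d = Finset.univ.sup dvec) (w : Fin n ⊕ Fin r → ℕ × ℕ)
    (hw : w = Sum.elim (fun _ => (1, 0)) (fun j => (dvec j, 1)))
    (u : ℕ) (v : ℕ × ℕ) (f : MvPolynomial (Fin n ⊕ Fin r) k)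
    (hf : f ∈ weightedHomogeneousSubmodule k w v)
    (hb : u ≤ v.2) (ha : d * v.2 + u ≤ v.1) :
    f ∈ (Ideal.span {f : MvPolynomial (Fin n ⊕ Fin r) k |
        ∃ i j, f = X (Sum.inl i) * X (Sum.inr j)}) ^ u := by
  rw [mem_weightedHomogeneousSubmodule] at hf
  rw [f.as_sum]
  apply Ideal.sum_mem
  intro σ hσ
  have hwσ := hf (mem_support_iff.mp hσ)
  rw [aux_weight dvec w hw σ] at hwσ
  have h1 : (∑ i, σ (Sum.inl i)) + ∑ j, σ (Sum.inr j) * dvec j = v.1 :=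
    congrArg Prod.fst hwσ
  have h2 : ∑ j, σ (Sum.inr j) = v.2 := congrArg Prod.snd hwσ
  have hdj : ∑ j, σ (Sum.inr j) * dvec j ≤ d * v.2 := by
    calc ∑ j, σ (Sum.inr j) * dvec j ≤ ∑ j, σ (Sum.inr j) * d :=
          Finset.sum_le_sum (fun j _ =>
            Nat.mul_le_mul_left _ (hd ▸ Finset.le_sup (Finset.mem_univ j)))
      _ = (∑ j, σ (Sum.inr j)) * d := by rw [Finset.sum_mul]
      _ = d * v.2 := by rw [h2, Nat.mul_comm]
  exact aux_mono u σ (by omega) (by omega) _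

set_option synthInstance.maxHeartbeats 1000000 in
set_option maxHeartbeats 1000000 in
/-- Bigraded Nakayama-type vanishing: let `S = k[X₁,…,Xₙ,Y₁,…,Y_r]` be bigraded by the
weights `w(Xᵢ) = (1,0)`, `w(Yⱼ) = (dⱼ,1)`, let `d = max dⱼ`, and let `L` be a finitely
generated bigraded `S`-module annihilated by a power of the irrelevant ideal
`S₊ = (XᵢYⱼ)`.  Then there are integers `m₁, m₂` with `L_{(p,q)} = 0` whenever
`p > dq + m₁` and `q > m₂`. -/
theorem stmt5 {k : Type*} [Field k]
    (n r : ℕ) (dvec : Fin r → ℕ) (d : ℕ) (hd : d = Finset.univ.sup dvec)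
    (w : Fin n ⊕ Fin r → ℕ × ℕ)
    (hw : w = Sum.elim (fun _ => (1, 0)) (fun j => (dvec j, 1)))
    (L : Type*) [AddCommGroup L]
    [Module (MvPolynomial (Fin n ⊕ Fin r) k) L]
    [Module.Finite (MvPolynomial (Fin n ⊕ Fin r) k) L]
    (ℳ : ℤ × ℤ → AddSubgroup L) [DirectSum.Decomposition ℳ]
    (hsmul : ∀ (v : ℕ × ℕ) (p : ℤ × ℤ),
      ∀ s ∈ weightedHomogeneousSubmodule k w v, ∀ x ∈ ℳ p,
        s • x ∈ ℳ (((v.1 : ℤ), (v.2 : ℤ)) + p))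
    (Splus : Ideal (MvPolynomial (Fin n ⊕ Fin r) k))
    (hSplus : Splus = Ideal.span {f | ∃ i j, f = X (Sum.inl i) * X (Sum.inr j)})
    (u : ℕ)
    (hann : Splus ^ u • (⊤ : Submodule (MvPolynomial (Fin n ⊕ Fin r) k) L) = ⊥) :
    ∃ m₁ m₂ : ℤ, ∀ p q : ℤ, (d : ℤ) * q + m₁ < p → m₂ < q → ℳ (p, q) = ⊥ := by
  classical
  obtain ⟨G, hG⟩ := Module.Finite.fg_top (R := MvPolynomial (Fin n ⊕ Fin r) k) (M := L)
  set D : Finset (ℤ × ℤ) := G.biUnion (fun g => (DirectSum.decompose ℳ g).support) with hD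
  set N₁ : ℕ := D.sup (fun v => (v.1 - d * v.2).toNat) with hN₁
  set N₂ : ℕ := D.sup (fun v => v.2.toNat) with hN₂
  refine ⟨(u : ℤ) + N₁, (u : ℤ) + N₂, ?_⟩
  intro p q hp hq
  set π : L →+ L := ((ℳ (p, q)).subtype).comp
    ((DFinsupp.evalAddMonoidHom (p, q)).comp
      (DirectSum.decomposeAddEquiv ℳ).toAddMonoidHom) with hπdef
  have hπ : ∀ y : L, π y = (DirectSum.decompose ℳ y (p, q) : L) := fun y => rfl
  have key : ∀ v ∈ D, ∀ y ∈ ℳ v, ∀ s : MvPolynomial (Fin n ⊕ Fin r) k,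
      π (s • y) = 0 := by
    intro v hv y hy s
    have hsum := sum_weightedHomogeneousComponent w s
    rw [finsum_eq_sum _ (weightedHomogeneousComponent_finsupp s)] at hsum
    rw [← hsum, Finset.sum_smul, map_sum]
    apply Finset.sum_eq_zero
    intro m _
    have hmem : weightedHomogeneousComponent w m s • y ∈ ℳ (((m.1 : ℤ), (m.2 : ℤ)) + v) :=
      hsmul m v _ (weightedHomogeneousComponent_mem w s m) y hy
    by_cases hcase : (((m.1 : ℤ), (m.2 : ℤ)) + v) = (p, q)
    · have h1 : (m.1 : ℤ) + v.1 = p := congrArg Prod.fst hcase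
      have h2 : (m.2 : ℤ) + v.2 = q := congrArg Prod.snd hcase
      have hv2 : (v.2 : ℤ) ≤ (N₂ : ℤ) :=
        le_trans (Int.self_le_toNat _)
          (by exact_mod_cast Finset.le_sup (f := fun v : ℤ × ℤ => v.2.toNat) hv)
      have hv1 : (v.1 - d * v.2 : ℤ) ≤ (N₁ : ℤ) :=
        le_trans (Int.self_le_toNat _)
          (by exact_mod_cast Finset.le_sup (f := fun v : ℤ × ℤ => (v.1 - d * v.2).toNat) hv)
      have hb : u ≤ m.2 := by
        have : (u : ℤ) ≤ (m.2 : ℤ) := by linarith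
        exact_mod_cast this
      have ha : d * m.2 + u ≤ m.1 := by
        have e : (d : ℤ) * q = (d : ℤ) * m.2 + (d : ℤ) * v.2 := by rw [← h2]; ring
        have : ((d * m.2 + u : ℕ) : ℤ) ≤ (m.1 : ℤ) := by push_cast; linarith
        exact_mod_cast this
      have hSmem : weightedHomogeneousComponent w m s ∈ Splus ^ u := by
        rw [hSplus]
        exact aux_hom dvec d hd w hw u m _ (weightedHomogeneousComponent_mem w s m) hb ha
      have hzero : weightedHomogeneousComponent w m s • y = 0 := by
        have h := Submodule.smul_mem_smul hSmem (Submodule.mem_top (x := y)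
          (R := MvPolynomial (Fin n ⊕ Fin r) k))
        rw [hann] at h
        simpa using h
      rw [hzero, map_zero]
    · rw [hπ]
      exact DirectSum.decompose_of_mem_ne ℳ hmem hcase
  have keyG : ∀ g ∈ G, ∀ s : MvPolynomial (Fin n ⊕ Fin r) k, π (s • g) = 0 := by
    intro g hg s
    conv_lhs => rw [← DirectSum.sum_support_decompose ℳ g]
    rw [Finset.smul_sum, map_sum]
    apply Finset.sum_eq_zero
    intro v hvsup
    exact key v (Finset.mem_biUnion.mpr ⟨g, hg, hvsup⟩) _ (DirectSum.decompose ℳ g v).2 s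
  rw [AddSubgroup.eq_bot_iff_forall]
  intro x hx
  have hxspan : x ∈ Submodule.span (MvPolynomial (Fin n ⊕ Fin r) k) (↑G : Set L) :=
    hG ▸ Submodule.mem_top
  obtain ⟨f, -, hf⟩ := Submodule.mem_span_finset.mp hxspan
  have hxπ : π x = x := by rw [hπ]; exact DirectSum.decompose_of_mem_same ℳ hx
  rw [← hxπ, ← hf, map_sum]
  exact Finset.sum_eq_zero (fun g hg => keyG g hg (f g))
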